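/- Let p ≥ 0 and 0 < α < 1. For nonnegative reals (β_{I'}) indexed by dyadic intervals of the circle with ∑_{I'} β_{I'} (log(1/|I'|))^p < ∞, define Δ(I) = ∑_{I' dyadic ⊂ I} β_{I'} (|I'|/|I|)^α. Then ∑_{I dyadic} Δ(I) (log(1/|I|))^p < ∞. -/

import Mathlib

open ENNReal

/-- A dyadic arc of the circle (modeled as `[0,1)`): level `n`, position `k < 2^n`. -/
structure DyadicArc where
  n : ℕ
  k : ℕ
  hk : k < 2 ^ n

namespace DyadicArc

/-- The underlying interval `[k/2^n, (k+1)/2^n)`. -/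
noncomputable def set (I : DyadicArc) : Set ℝ :=
  Set.Ico ((I.k : ℝ) / 2 ^ I.n) (((I.k : ℝ) + 1) / 2 ^ I.n)

/-- The length `2^{-n}` as a real number. -/
noncomputable def len (I : DyadicArc) : ℝ := (1 / 2 : ℝ) ^ I.n

/-- The length `2^{-n}` as an extended nonnegative real. -/
noncomputable def lenE (I : DyadicArc) : ℝ≥0∞ := (1 / 2 : ℝ≥0∞) ^ I.n

end DyadicArc

lemma log_len (I : DyadicArc) : Real.log (1 / I.len) = I.n * Real.log 2 := by
  rw [DyadicArc.len, one_div, ← inv_pow, one_div, inv_inv, Real.log_pow]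

lemma arc_lt (I : DyadicArc) : (I.k : ℝ) / 2 ^ I.n < ((I.k : ℝ) + 1) / 2 ^ I.n := by
  have h2 : (0:ℝ) < 2 ^ I.n := by positivity
  exact div_lt_div_of_pos_right (by linarith) h2

lemma subset_level {I' I : DyadicArc} (h : I'.set ⊆ I.set) : I.n ≤ I'.n := by
  rw [DyadicArc.set, DyadicArc.set, Set.Ico_subset_Ico_iff (arc_lt I')] at h
  obtain ⟨h1, h2⟩ := h
  have key : (1:ℝ) / 2 ^ I'.n ≤ 1 / 2 ^ I.n := by
    have := sub_le_sub h2 h1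
    have e1 : ((I'.k : ℝ) + 1) / 2 ^ I'.n - (I'.k : ℝ) / 2 ^ I'.n = 1 / 2 ^ I'.n := by
      field_simp
      ring
    have e2 : ((I.k : ℝ) + 1) / 2 ^ I.n - (I.k : ℝ) / 2 ^ I.n = 1 / 2 ^ I.n := by
      field_simp
      ring
    linarith
  have h2n : (2:ℝ) ^ I.n ≤ 2 ^ I'.n := by
    rw [div_le_div_iff₀ (by positivity) (by positivity)] at key
    linarith
  exact_mod_cast (pow_le_pow_iff_right₀ (by norm_num : (1:ℝ) < 2)).mp h2n

lemma same_level_eq {I₁ I₂ I' : DyadicArc} (hn : I₁.n = I₂.n)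
    (h1 : I'.set ⊆ I₁.set) (h2 : I'.set ⊆ I₂.set) : I₁ = I₂ := by
  have hx : (I'.k : ℝ) / 2 ^ I'.n ∈ I'.set := ⟨le_refl _, arc_lt I'⟩
  have hx1 := h1 hx
  have hx2 := h2 hx
  rw [DyadicArc.set] at hx1 hx2
  obtain ⟨a1, b1⟩ := hx1
  obtain ⟨a2, b2⟩ := hx2
  obtain ⟨n₁, k₁, hk₁⟩ := I₁
  obtain ⟨n₂, k₂, hk₂⟩ := I₂
  simp only at hn a1 b1 a2 b2 ⊢
  subst hn
  have hkk : k₁ = k₂ := by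
    have c1 : (k₁ : ℝ) < k₂ + 1 := by
      have := lt_of_le_of_lt a1 b2
      have hp : (0:ℝ) < 2 ^ n₁ := by positivity
      rwa [div_lt_div_iff_of_pos_right hp] at this
    have c2 : (k₂ : ℝ) < k₁ + 1 := by
      have := lt_of_le_of_lt a2 b1
      have hp : (0:ℝ) < 2 ^ n₁ := by positivity
      rwa [div_lt_div_iff_of_pos_right hp] at this
    have : k₁ < k₂ + 1 := by exact_mod_cast c1
    have : k₂ < k₁ + 1 := by exact_mod_cast c2
    omega
  subst hkk
  rfl

lemma ratio_pow {m n : ℕ} (h : n ≤ m) (α : ℝ) :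
    (((1/2:ℝ≥0∞)) ^ m / (1/2:ℝ≥0∞) ^ n) ^ α = ((1/2:ℝ≥0∞) ^ α) ^ (m - n) := by
  have hd : (1/2:ℝ≥0∞) ^ m / (1/2:ℝ≥0∞) ^ n = (1/2:ℝ≥0∞) ^ (m - n) := by
    have h2 : (1/2:ℝ≥0∞) ^ (m-n) * (1/2:ℝ≥0∞) ^ n = (1/2:ℝ≥0∞) ^ m := by
      rw [← pow_add]; congr 1; omega
    rw [← h2, mul_div_assoc, ENNReal.div_self (by simp) (by simp), mul_one]
  rw [hd, ← ENNReal.rpow_natCast (1/2 : ℝ≥0∞) (m - n),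
    ← ENNReal.rpow_mul, mul_comm, ENNReal.rpow_mul, ENNReal.rpow_natCast]

noncomputable def wgt (p : ℝ) (m : ℕ) : ℝ≥0∞ := ENNReal.ofReal ((m * Real.log 2) ^ p)

lemma wgt_mono {p : ℝ} (hp : 0 ≤ p) {a b : ℕ} (hab : a ≤ b) : wgt p a ≤ wgt p b := by
  apply ENNReal.ofReal_le_ofReal
  have hl : (0:ℝ) ≤ Real.log 2 := Real.log_nonneg (by norm_num)
  apply Real.rpow_le_rpow (by positivity) ?_ hp
  exact mul_le_mul_of_nonneg_right (by exact_mod_cast hab) hl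

lemma geom_tail (r : ℝ≥0∞) (m : ℕ) :
    (∑' n : ℕ, if n ≤ m then r ^ (m - n) else 0) ≤ (1 - r)⁻¹ := by
  rw [tsum_eq_sum (s := Finset.range (m+1)) (fun b hb => by
    rw [if_neg]; simp only [Finset.mem_range] at hb; omega)]
  calc ∑ n ∈ Finset.range (m+1), (if n ≤ m then r^(m-n) else 0)
      = ∑ n ∈ Finset.range (m+1), r^(m-n) := by
        apply Finset.sum_congr rfl; intro n hn
        rw [if_pos]; simp only [Finset.mem_range] at hn; omega
    _ = ∑ j ∈ Finset.range (m+1), r^j := by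
        have := Finset.sum_range_reflect (fun j => r^j) (m+1)
        simpa using this
    _ ≤ ∑' j : ℕ, r^j := ENNReal.sum_le_tsum _
    _ = (1-r)⁻¹ := ENNReal.tsum_geometric r

lemma rowsum {p : ℝ} (hp : 0 ≤ p) (b : ℝ≥0∞) (m : ℕ) (r : ℝ≥0∞) :
    (∑' n : ℕ, if n ≤ m ∧ 1 ≤ n then b * r ^ (m - n) * wgt p n else 0)
      ≤ b * wgt p m * (1-r)⁻¹ := by
  calc (∑' n : ℕ, if n ≤ m ∧ 1 ≤ n then b * r ^ (m - n) * wgt p n else 0)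
      ≤ ∑' n : ℕ, (if n ≤ m then r ^ (m - n) else 0) * (b * wgt p m) := by
        apply ENNReal.tsum_le_tsum; intro n
        by_cases hc : n ≤ m ∧ 1 ≤ n
        · rw [if_pos hc, if_pos hc.1]
          calc b * r ^ (m - n) * wgt p n ≤ b * r ^ (m - n) * wgt p m := by
                exact mul_le_mul_right (wgt_mono hp hc.1) _
            _ = r ^ (m - n) * (b * wgt p m) := by ring
        · rw [if_neg hc]; exact zero_le
    _ = (∑' n : ℕ, if n ≤ m then r ^ (m - n) else 0) * (b * wgt p m) :=
        ENNReal.tsum_mul_right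
    _ ≤ (1 - r)⁻¹ * (b * wgt p m) := mul_le_mul_left (geom_tail r m) _
    _ = b * wgt p m * (1-r)⁻¹ := by ring

/-- For `p ≥ 0`, `0 < α < 1`, and nonnegative weights `β_{I'}` on dyadic intervals of the
circle (of length ≤ 1/2) with `∑_{I'} β_{I'} (log(1/|I'|))^p < ∞`, setting
`Δ(I) = ∑_{I' ⊂ I} β_{I'} (|I'|/|I|)^α`, one has `∑_I Δ(I)(log(1/|I|))^p < ∞`. -/
theorem stmt_19 (p α : ℝ) (hp : 0 ≤ p) (hα0 : 0 < α) (hα1 : α < 1)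
    (β : DyadicArc → ℝ≥0∞)
    (hβ : (∑' I' : {I' : DyadicArc // 1 ≤ I'.n},
        β I' * ENNReal.ofReal ((Real.log (1 / (I' : DyadicArc).len)) ^ p)) ≠ ⊤) :
    (∑' I : {I : DyadicArc // 1 ≤ I.n},
      (∑' I' : {I' : DyadicArc // DyadicArc.set I' ⊆ DyadicArc.set (I : DyadicArc)},
          β I' * ((I' : DyadicArc).lenE / (I : DyadicArc).lenE) ^ α) *
        ENNReal.ofReal ((Real.log (1 / (I : DyadicArc).len)) ^ p)) ≠ ⊤ := by
  classical
  set r : ℝ≥0∞ := (1/2 : ℝ≥0∞) ^ α with hrdef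
  have hrlt : r < 1 := ENNReal.rpow_lt_one (by norm_num) hα0
  have hC : (1 - r)⁻¹ ≠ ⊤ := by
    rw [ENNReal.inv_ne_top]
    rw [ne_eq, tsub_eq_zero_iff_le, not_le]
    exact hrlt
  -- the weight rewrite
  have hβ' : (∑' I' : {I' : DyadicArc // 1 ≤ I'.n},
      β I' * wgt p (I' : DyadicArc).n) ≠ ⊤ := by
    simpa only [wgt, log_len] using hβ
  -- rewrite the double sum as a sum over a sigma type
  have hre : (∑' I : {I : DyadicArc // 1 ≤ I.n},
      (∑' I' : {I' : DyadicArc // DyadicArc.set I' ⊆ DyadicArc.set (I : DyadicArc)},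
          β I' * ((I' : DyadicArc).lenE / (I : DyadicArc).lenE) ^ α) *
        ENNReal.ofReal ((Real.log (1 / (I : DyadicArc).len)) ^ p))
      = ∑' (x : Σ I : {I : DyadicArc // 1 ≤ I.n},
            {I' : DyadicArc // DyadicArc.set I' ⊆ DyadicArc.set (I : DyadicArc)}),
          β x.2 * (((x.2 : DyadicArc)).lenE / ((x.1 : DyadicArc)).lenE) ^ α
            * wgt p (x.1 : DyadicArc).n := by
    rw [ENNReal.tsum_sigma']
    apply tsum_congr; intro I
    have hw : ENNReal.ofReal (Real.log (1 / (I : DyadicArc).len) ^ p)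
        = wgt p (I : DyadicArc).n := by rw [wgt, log_len]
    rw [hw, ← ENNReal.tsum_mul_right]
  -- target function on pairs (interval, ancestor level)
  set G : {J : DyadicArc // 1 ≤ J.n} × ℕ → ℝ≥0∞ :=
    fun y => if y.2 ≤ (y.1 : DyadicArc).n ∧ 1 ≤ y.2 then
      β y.1 * r ^ ((y.1 : DyadicArc).n - y.2) * wgt p y.2 else 0 with hGdef
  let e : (Σ I : {I : DyadicArc // 1 ≤ I.n},
        {I' : DyadicArc // DyadicArc.set I' ⊆ DyadicArc.set (I : DyadicArc)}) →
      {J : DyadicArc // 1 ≤ J.n} × ℕ :=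
    fun x => (⟨x.2, le_trans x.1.2 (subset_level x.2.2)⟩, (x.1 : DyadicArc).n)
  have he : Function.Injective e := by
    rintro ⟨⟨I1, hI1⟩, ⟨J1, hJ1⟩⟩ ⟨⟨I2, hI2⟩, ⟨J2, hJ2⟩⟩ hxy
    simp only [e, Prod.mk.injEq, Subtype.mk.injEq] at hxy
    obtain ⟨hJ, hn⟩ := hxy
    subst hJ
    have hI : I1 = I2 := same_level_eq hn hJ1 hJ2
    subst hI
    rfl
  have hpt : ∀ x, β x.2 * (((x.2 : DyadicArc)).lenE / ((x.1 : DyadicArc)).lenE) ^ α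
      * wgt p (x.1 : DyadicArc).n ≤ G (e x) := by
    rintro ⟨⟨I, hI⟩, ⟨I', hsub⟩⟩
    have hlev : I.n ≤ I'.n := subset_level hsub
    simp only [hGdef, e]
    rw [if_pos ⟨hlev, hI⟩]
    apply le_of_eq
    congr 1
    congr 1
    rw [DyadicArc.lenE, DyadicArc.lenE, ratio_pow hlev, hrdef]
  have hle := Summable.tsum_le_tsum_of_inj e he (fun c _ => zero_le) hpt
    ENNReal.summable ENNReal.summable
  have hGsum : (∑' y, G y) ≤ (∑' J : {J : DyadicArc // 1 ≤ J.n},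
      β J * wgt p (J : DyadicArc).n) * (1 - r)⁻¹ := by
    rw [ENNReal.tsum_prod', ← ENNReal.tsum_mul_right]
    apply ENNReal.tsum_le_tsum; intro J
    exact rowsum hp (β J) (J : DyadicArc).n r
  rw [hre]
  exact ne_top_of_le_ne_top (ENNReal.mul_ne_top hβ' hC) (hle.trans hGsum)
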